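/- arXiv:quant-ph/0603190 — 2 statements merged into one kernel-verified Lean document; each statement's English description precedes it below -/
import Mathlib

section
/- With W_ζ and Ŵ_ζ as the spans of λ_{ij} and λ̂_{ij} over pairs {i,j} with i XOR j = ζ, and C the space of diagonal traceless matrices, one has [W_ζ, C] ⊆ Ŵ_ζ, [Ŵ_ζ, C] ⊆ W_ζ, and [W_ζ, Ŵ_ζ] ⊆ C for every nonzero ζ ∈ (Z/2Z)^p. -/
open Matrix

/-- `λ_{ij} = E_{ij} + E_{ji}`, indices identified with `(ℤ/2ℤ)^p`. -/
noncomputable def lam {p : ℕ} (i j : Fin p → ZMod 2) :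
    Matrix (Fin p → ZMod 2) (Fin p → ZMod 2) ℂ :=
  single i j 1 + single j i 1

/-- `λ̂_{ij} = -i·E_{ij} + i·E_{ji}` (so `λ̂_{ij} = -λ̂_{ji}`). -/
noncomputable def lamHat {p : ℕ} (i j : Fin p → ZMod 2) :
    Matrix (Fin p → ZMod 2) (Fin p → ZMod 2) ℂ :=
  (-Complex.I) • single i j 1 + Complex.I • single j i 1

/-- `W_ζ`: span of the `λ_{ij}` over pairs with `i XOR j = ζ`. -/
noncomputable def W {p : ℕ} (ζ : Fin p → ZMod 2) :
    Submodule ℂ (Matrix (Fin p → ZMod 2) (Fin p → ZMod 2) ℂ) :=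
  Submodule.span ℂ {A | ∃ i j, i + j = ζ ∧ A = lam i j}

/-- `Ŵ_ζ`: span of the `λ̂_{ij}` over pairs with `i XOR j = ζ`. -/
noncomputable def What {p : ℕ} (ζ : Fin p → ZMod 2) :
    Submodule ℂ (Matrix (Fin p → ZMod 2) (Fin p → ZMod 2) ℂ) :=
  Submodule.span ℂ {A | ∃ i j, i + j = ζ ∧ A = lamHat i j}

-- char two helper
lemma add_self_zero {p : ℕ} (x : Fin p → ZMod 2) : x + x = 0 := by
  funext t
  exact CharTwo.add_self_eq_zero _

-- commutator of single with a diagonal matrix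
lemma std_diag_comm {p : ℕ} (D : Matrix (Fin p → ZMod 2) (Fin p → ZMod 2) ℂ)
    (hD : D.IsDiag) (i j : Fin p → ZMod 2) :
    single i j (1:ℂ) * D - D * single i j 1
      = (D j j - D i i) • single i j 1 := by
  have hd := hD.diagonal_diag
  ext a b
  rw [← hd]
  simp only [Matrix.sub_apply, mul_diagonal, diagonal_mul, Matrix.smul_apply, smul_eq_mul,
    single, of_apply, diag, diagonal_apply]
  split_ifs with h
  · obtain ⟨rfl, rfl⟩ := h; ring
  · ring

lemma lam_diag_comm {p : ℕ} (D : Matrix (Fin p → ZMod 2) (Fin p → ZMod 2) ℂ)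
    (hD : D.IsDiag) (i j : Fin p → ZMod 2) :
    lam i j * D - D * lam i j = ((D j j - D i i) * Complex.I) • lamHat i j := by
  have h1 := std_diag_comm D hD i j
  have h2 := std_diag_comm D hD j i
  have key : lam i j * D - D * lam i j
      = (single i j (1:ℂ) * D - D * single i j 1)
        + (single j i (1:ℂ) * D - D * single j i 1) := by
    simp only [lam]; noncomm_ring
  rw [key, h1, h2, lamHat]
  rw [smul_add, smul_smul, smul_smul]
  match_scalars
  · linear_combination (D j j - D i i) * Complex.I_sq
  · linear_combination (D i i - D j j) * Complex.I_sq

lemma lamHat_diag_comm {p : ℕ} (D : Matrix (Fin p → ZMod 2) (Fin p → ZMod 2) ℂ)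
    (hD : D.IsDiag) (i j : Fin p → ZMod 2) :
    lamHat i j * D - D * lamHat i j = (-Complex.I * (D j j - D i i)) • lam i j := by
  have h1 := std_diag_comm D hD i j
  have h2 := std_diag_comm D hD j i
  have key : lamHat i j * D - D * lamHat i j
      = (-Complex.I) • (single i j (1:ℂ) * D - D * single i j 1)
        + Complex.I • (single j i (1:ℂ) * D - D * single j i 1) := by
    simp only [lamHat, add_mul, mul_add, smul_mul_assoc, mul_smul_comm, smul_sub]
    abel
  rw [key, h1, h2, lam]
  match_scalars <;> ring

noncomputable def Cdiag {p : ℕ} :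
    Submodule ℂ (Matrix (Fin p → ZMod 2) (Fin p → ZMod 2) ℂ) where
  carrier := {A | A.IsDiag ∧ A.trace = 0}
  add_mem' h1 h2 := ⟨h1.1.add h2.1, by simp [trace_add, h1.2, h2.2]⟩
  zero_mem' := ⟨Matrix.isDiag_zero, by simp⟩
  smul_mem' c A h := ⟨h.1.smul c, by simp [h.2]⟩

lemma lamHat_swap {p : ℕ} (i j : Fin p → ZMod 2) : lamHat j i = -lamHat i j := by
  simp only [lamHat, neg_add, neg_smul, neg_neg]
  abel

lemma same_bracket {p : ℕ} (i j : Fin p → ZMod 2) (hne : i ≠ j) :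
    lam i j * lamHat i j - lamHat i j * lam i j
      = (2 * Complex.I) • single i i 1
        + (-(2 * Complex.I)) • single j j 1 := by
  simp only [lam, lamHat, add_mul, mul_add, smul_mul_assoc, mul_smul_comm,
    single_mul_single_same, single_mul_single_of_ne (h := hne.symm),
    single_mul_single_of_ne (h := hne), smul_zero, mul_one]
  match_scalars <;> ring

lemma gen_bracket {p : ℕ} (ζ : Fin p → ZMod 2) (hζ : ζ ≠ 0)
    (i j k l : Fin p → ZMod 2) (hij : i + j = ζ) (hkl : k + l = ζ) :
    lam i j * lamHat k l - lamHat k l * lam i j ∈ (Cdiag (p := p)) := by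
  have hne : i ≠ j := by
    rintro rfl
    exact hζ (by rw [← hij, add_self_zero])
  have htr : ∀ X Y : Matrix (Fin p → ZMod 2) (Fin p → ZMod 2) ℂ,
      (X * Y - Y * X).trace = 0 := by
    intro X Y
    rw [trace_sub, trace_mul_comm, sub_self]
  have hdiag_same : (lam i j * lamHat i j - lamHat i j * lam i j).IsDiag := by
    rw [same_bracket i j hne]
    intro a b hab
    simp only [Matrix.add_apply, Matrix.smul_apply, single, of_apply, smul_eq_mul]
    rw [if_neg, if_neg]
    · ring
    · rintro ⟨rfl, rfl⟩; exact hab rfl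
    · rintro ⟨rfl, rfl⟩; exact hab rfl
  by_cases hk : k = i
  · subst hk
    have hl : l = j := add_left_cancel (hkl.trans hij.symm)
    subst hl
    exact ⟨hdiag_same, htr _ _⟩
  · by_cases hk2 : k = j
    · have hl : l = i := by
        apply add_left_cancel (a := j)
        rw [← hk2, hkl, ← hij, add_comm, hk2]
      have e : lamHat k l = -lamHat i j := by rw [hk2, hl, lamHat_swap]
      rw [e]
      have : lam i j * -lamHat i j - -lamHat i j * lam i j
          = -(lam i j * lamHat i j - lamHat i j * lam i j) := by noncomm_ring
      rw [this]
      exact neg_mem ⟨hdiag_same, htr _ _⟩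
    · -- disjoint case
      have hli : l ≠ i := by
        rintro rfl
        apply hk2
        have : k + l = j + l := by rw [hkl, ← hij, add_comm]
        exact add_right_cancel this
      have hlj : l ≠ j := by
        rintro rfl
        apply hk
        have : k + l = i + l := by rw [hkl, ← hij]
        exact add_right_cancel this
      have h0 : lam i j * lamHat k l - lamHat k l * lam i j = 0 := by
        simp [lam, lamHat, add_mul, mul_add, smul_mul_assoc, mul_smul_comm,
          single_mul_single_of_ne, Ne.symm hk2, Ne.symm hk, hli, hlj, hk, hk2,
          Ne.symm hli, Ne.symm hlj]
      rw [h0]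
      exact zero_mem _

lemma mem_Cdiag {p : ℕ} (A : Matrix (Fin p → ZMod 2) (Fin p → ZMod 2) ℂ) :
    A ∈ (Cdiag (p := p)) ↔ A.IsDiag ∧ A.trace = 0 := Iff.rfl

/-- Within a conjugate pair: `[W_ζ, C] ⊆ Ŵ_ζ`, `[Ŵ_ζ, C] ⊆ W_ζ`, and `[W_ζ, Ŵ_ζ] ⊆ C`,
where `C` is the space of diagonal traceless matrices. -/
theorem conjugate_pair_center {p : ℕ} (ζ : Fin p → ZMod 2) (hζ : ζ ≠ 0) :
    (∀ A ∈ W ζ, ∀ D : Matrix (Fin p → ZMod 2) (Fin p → ZMod 2) ℂ,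
      D.IsDiag → D.trace = 0 → A * D - D * A ∈ What ζ) ∧
    (∀ A ∈ What ζ, ∀ D : Matrix (Fin p → ZMod 2) (Fin p → ZMod 2) ℂ,
      D.IsDiag → D.trace = 0 → A * D - D * A ∈ W ζ) ∧
    (∀ A ∈ W ζ, ∀ B ∈ What ζ,
      (A * B - B * A).IsDiag ∧ (A * B - B * A).trace = 0) := by
  refine ⟨?_, ?_, ?_⟩
  · intro A hA D hD _
    have h : A ∈ (What ζ).comap (LinearMap.mulRight ℂ D - LinearMap.mulLeft ℂ D) := by
      refine Submodule.span_le.mpr ?_ hA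
      rintro _ ⟨i, j, hij, rfl⟩
      simp only [Set.mem_setOf_eq, SetLike.mem_coe, Submodule.mem_comap,
        LinearMap.sub_apply, LinearMap.mulRight_apply, LinearMap.mulLeft_apply]
      rw [lam_diag_comm D hD]
      exact Submodule.smul_mem _ _ (Submodule.subset_span ⟨i, j, hij, rfl⟩)
    simpa only [Submodule.mem_comap, LinearMap.sub_apply, LinearMap.mulRight_apply,
      LinearMap.mulLeft_apply] using h
  · intro A hA D hD _
    have h : A ∈ (W ζ).comap (LinearMap.mulRight ℂ D - LinearMap.mulLeft ℂ D) := by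
      refine Submodule.span_le.mpr ?_ hA
      rintro _ ⟨i, j, hij, rfl⟩
      simp only [Set.mem_setOf_eq, SetLike.mem_coe, Submodule.mem_comap,
        LinearMap.sub_apply, LinearMap.mulRight_apply, LinearMap.mulLeft_apply]
      rw [lamHat_diag_comm D hD]
      exact Submodule.smul_mem _ _ (Submodule.subset_span ⟨i, j, hij, rfl⟩)
    simpa only [Submodule.mem_comap, LinearMap.sub_apply, LinearMap.mulRight_apply,
      LinearMap.mulLeft_apply] using h
  · intro A hA B hB
    have gen : ∀ i j : Fin p → ZMod 2, i + j = ζ →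
        lam i j * B - B * lam i j ∈ (Cdiag (p := p)) := by
      intro i j hij
      have h : B ∈ (Cdiag (p := p)).comap
          (LinearMap.mulLeft ℂ (lam i j) - LinearMap.mulRight ℂ (lam i j)) := by
        refine Submodule.span_le.mpr ?_ hB
        rintro _ ⟨k, l, hkl, rfl⟩
        simp only [Set.mem_setOf_eq, SetLike.mem_coe, Submodule.mem_comap,
          LinearMap.sub_apply, LinearMap.mulRight_apply, LinearMap.mulLeft_apply]
        exact gen_bracket ζ hζ i j k l hij hkl
      simpa only [Submodule.mem_comap, LinearMap.sub_apply, LinearMap.mulRight_apply,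
        LinearMap.mulLeft_apply] using h
    have h : A ∈ (Cdiag (p := p)).comap
        (LinearMap.mulRight ℂ B - LinearMap.mulLeft ℂ B) := by
      refine Submodule.span_le.mpr ?_ hA
      rintro _ ⟨i, j, hij, rfl⟩
      simp only [Set.mem_setOf_eq, SetLike.mem_coe, Submodule.mem_comap,
        LinearMap.sub_apply, LinearMap.mulRight_apply, LinearMap.mulLeft_apply]
      exact gen i j hij
    exact (mem_Cdiag _).mp (by simpa only [Submodule.mem_comap, LinearMap.sub_apply,
      LinearMap.mulRight_apply, LinearMap.mulLeft_apply] using h)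
end

section
/- Each space W_ζ (the span of λ_{ij} over pairs with i XOR j = ζ, ζ nonzero) is an abelian subalgebra of matrices: any two elements of W_ζ commute. The same holds for Ŵ_ζ. -/
open Matrix

lemma span_pairwise_comm {M : Type*} [Ring M] [Algebra ℂ M]
    (s : Set M) (h : ∀ a ∈ s, ∀ b ∈ s, a * b = b * a) :
    ∀ A ∈ Submodule.span ℂ s, ∀ B ∈ Submodule.span ℂ s, A * B = B * A := by
  intro A hA B hB
  induction hA using Submodule.span_induction with
  | mem x hx =>
    induction hB using Submodule.span_induction with
    | mem y hy => exact h x hx y hy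
    | zero => simp
    | add y z _ _ hy hz => rw [mul_add, add_mul, hy, hz]
    | smul c y _ hy => rw [mul_smul_comm, smul_mul_assoc, hy]
  | zero => simp
  | add x y _ _ hx hy => rw [add_mul, mul_add, hx, hy]
  | smul c x _ hx => rw [smul_mul_assoc, mul_smul_comm, hx]

lemma lam_comm {p : ℕ} {i j k l : Fin p → ZMod 2} (h : i + j = k + l) :
    lam i j * lam k l = lam k l * lam i j := by
  by_cases hik : i = k
  · subst hik; have : j = l := add_left_cancel h
    subst this; rfl
  by_cases hil : i = l
  · subst hil
    have hjk : j = k := by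
      have h' : j + i = k + i := by rw [add_comm j i, h, add_comm]
      exact add_right_cancel h'
    subst hjk
    have e : lam j i = lam i j := by unfold lam; rw [add_comm]
    rw [e]
  · have hjk : j ≠ k := by
      intro e; apply hil; subst e
      have h2 : j + i = j + l := by rw [add_comm j i, h]
      exact add_left_cancel h2
    have hjl : j ≠ l := by
      intro e; apply hik; subst e
      have h2 : i + j = k + j := by rw [h, add_comm]
      exact add_right_cancel h2
    simp [lam, add_mul, mul_add, single_mul_single_of_ne, hjk, hjl, hik, hil,
      Ne.symm hjk, Ne.symm hjl, Ne.symm hik, Ne.symm hil]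

lemma lamHat_comm {p : ℕ} {i j k l : Fin p → ZMod 2} (h : i + j = k + l) :
    lamHat i j * lamHat k l = lamHat k l * lamHat i j := by
  by_cases hik : i = k
  · subst hik; have : j = l := add_left_cancel h
    subst this; rfl
  by_cases hil : i = l
  · subst hil
    have hjk : j = k := by
      have h' : j + i = k + i := by rw [add_comm j i, h, add_comm]
      exact add_right_cancel h'
    subst hjk
    have e : lamHat j i = -lamHat i j := by unfold lamHat; module
    rw [e, neg_mul, mul_neg]
  · have hjk : j ≠ k := by
      intro e; apply hil; subst e
      have h2 : j + i = j + l := by rw [add_comm j i, h]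
      exact add_left_cancel h2
    have hjl : j ≠ l := by
      intro e; apply hik; subst e
      have h2 : i + j = k + j := by rw [h, add_comm]
      exact add_right_cancel h2
    simp [lamHat, add_mul, mul_add, smul_mul_assoc, mul_smul_comm,
      single_mul_single_of_ne, hjk, hjl, hik, hil,
      Ne.symm hjk, Ne.symm hjl, Ne.symm hik, Ne.symm hil]

/-- Each `W_ζ` and each `Ŵ_ζ` (for nonzero `ζ`) is abelian: any two of its elements commute. -/
theorem W_abelian {p : ℕ} (ζ : Fin p → ZMod 2) (hζ : ζ ≠ 0) :
    (∀ A ∈ W ζ, ∀ B ∈ W ζ, A * B = B * A) ∧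
    (∀ A ∈ What ζ, ∀ B ∈ What ζ, A * B = B * A) := by
  constructor
  · apply span_pairwise_comm
    rintro a ⟨i, j, hij, rfl⟩ b ⟨k, l, hkl, rfl⟩
    exact lam_comm (hij.trans hkl.symm)
  · apply span_pairwise_comm
    rintro a ⟨i, j, hij, rfl⟩ b ⟨k, l, hkl, rfl⟩
    exact lamHat_comm (hij.trans hkl.symm)
end
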